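/- Let A be a symmetric positive-definite 3×3 real matrix with μ_A < 0 (elliptic flow), S := A⁻¹J(A−I), and λ := √(−μ_A/det A) > 0. Then the flow generated by S is periodic with period τ := 2π/λ: e^{τS} = I. In particular, for every k₀ ∈ ℝ³ the trajectory t ↦ e^{−tSᵀ}k₀ is τ-periodic and bounded. -/

import Mathlib

open Matrix Real

/-- The Coriolis-type matrix `J`. -/
noncomputable def Jmat : Matrix (Fin 3) (Fin 3) ℝ := !![0, -1, 0; 1, 0, 0; 0, 0, 0]

/-- The matrix `S := A⁻¹ J (A − I)`. -/
noncomputable def Smat (A : Matrix (Fin 3) (Fin 3) ℝ) : Matrix (Fin 3) (Fin 3) ℝ :=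
  A⁻¹ * Jmat * (A - 1)

section Aux

open Nat

lemma exp_eq_one_of_cube {𝔸 : Type*} [NormedRing 𝔸] [NormedAlgebra ℝ 𝔸] [CompleteSpace 𝔸]
    (x : 𝔸) (hx : x ^ 3 = -(((2 * π) ^ 2) • x)) : NormedSpace.exp x = 1 := by
  set c : ℝ := 2 * π with hc
  have hc0 : c ≠ 0 := by positivity
  have hodd : ∀ n : ℕ, x ^ (2 * n + 1) = ((-(c ^ 2)) ^ n) • x := by
    intro n
    induction n with
    | zero => simp
    | succ n ih =>
      have h2 : 2 * (n + 1) + 1 = (2 * n + 1) + 2 := by ring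
      rw [h2, pow_add, ih, smul_mul_assoc, ← pow_succ' x 2, (by norm_num : (2:ℕ)+1 = 3), hx,
        pow_succ (-(c ^ 2)) n, mul_smul, neg_smul]
  have heven : ∀ n : ℕ, x ^ (2 * n + 2) = ((-(c ^ 2)) ^ n) • (x ^ 2) := by
    intro n
    have h2 : 2 * n + 2 = (2 * n + 1) + 1 := by ring
    rw [h2, pow_succ, hodd, smul_mul_assoc, ← sq]
  have hpowneg : ∀ k : ℕ, (-(c ^ 2)) ^ k = (-1 : ℝ) ^ k * c ^ (2 * k) := by
    intro k
    rw [neg_pow, pow_mul]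
  have hsin : HasSum (fun k : ℕ => (((2 * k + 1)! : ℝ))⁻¹ • x ^ (2 * k + 1)) (0 : 𝔸) := by
    have h1 : HasSum (fun n : ℕ => (-1 : ℝ) ^ n * c ^ (2 * n + 1) / ↑(2 * n + 1)!) 0 := by
      have := Real.hasSum_sin c
      rwa [hc, Real.sin_two_pi] at this
    have h2 := (h1.div_const c).smul_const x
    rw [zero_div, zero_smul] at h2
    convert h2 using 2 with k
    rw [hodd k, smul_smul, hpowneg k]
    congr 1
    have hne : ((2 * k + 1)! : ℝ) ≠ 0 := by positivity
    field_simp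
    ring
  have hcos : HasSum (fun k : ℕ => (((2 * k + 2)! : ℝ))⁻¹ • x ^ (2 * k + 2)) (0 : 𝔸) := by
    have h0 : HasSum (fun n : ℕ => (-1 : ℝ) ^ n * c ^ (2 * n) / ↑(2 * n)!) 1 := by
      have := Real.hasSum_cos c
      rwa [hc, Real.cos_two_pi] at this
    have h1 : HasSum (fun n : ℕ => (-1 : ℝ) ^ (n + 1) * c ^ (2 * (n + 1)) / ↑(2 * (n + 1))!) 0 := by
      rw [← hasSum_nat_add_iff' 1] at h0
      simpa using h0
    have h2 := ((h1.neg.div_const (c ^ 2)).smul_const (x ^ 2))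
    rw [neg_zero, zero_div, zero_smul] at h2
    convert h2 using 2 with k
    rw [heven k, smul_smul, hpowneg k]
    congr 1
    have hne : ((2 * (k + 1))! : ℝ) ≠ 0 := by positivity
    have h3 : 2 * (k + 1) = 2 * k + 2 := by ring
    rw [h3] at hne ⊢
    field_simp
    ring
  have hfull : HasSum (fun n : ℕ => (((n + 1)! : ℝ))⁻¹ • x ^ (n + 1)) (0 : 𝔸) := by
    have h := HasSum.even_add_odd (f := fun n : ℕ => (((n + 1)! : ℝ))⁻¹ • x ^ (n + 1))
      hsin hcos
    simpa using h
  have hexp := NormedSpace.exp_series_hasSum_exp' (𝕂 := ℝ) x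
  have h := hexp.unique ((hasSum_nat_add_iff (f := fun n : ℕ => (((n)! : ℝ))⁻¹ • x ^ n) 1).mp hfull)
  rw [h]
  simp

lemma smul_fin_three' (x a₁₁ a₁₂ a₁₃ a₂₁ a₂₂ a₂₃ a₃₁ a₃₂ a₃₃ : ℝ) :
    x • !![a₁₁, a₁₂, a₁₃; a₂₁, a₂₂, a₂₃; a₃₁, a₃₂, a₃₃] =
      !![x*a₁₁, x*a₁₂, x*a₁₃; x*a₂₁, x*a₂₂, x*a₂₃; x*a₃₁, x*a₃₂, x*a₃₃] := by
  ext i j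
  fin_cases i <;> fin_cases j <;> simp

lemma eq_fin_three' {a₁₁ a₁₂ a₁₃ a₂₁ a₂₂ a₂₃ a₃₁ a₃₂ a₃₃ b₁₁ b₁₂ b₁₃ b₂₁ b₂₂ b₂₃ b₃₁ b₃₂ b₃₃ : ℝ}
    (h₁₁ : a₁₁ = b₁₁) (h₁₂ : a₁₂ = b₁₂) (h₁₃ : a₁₃ = b₁₃)
    (h₂₁ : a₂₁ = b₂₁) (h₂₂ : a₂₂ = b₂₂) (h₂₃ : a₂₃ = b₂₃)
    (h₃₁ : a₃₁ = b₃₁) (h₃₂ : a₃₂ = b₃₂) (h₃₃ : a₃₃ = b₃₃) :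
    !![a₁₁, a₁₂, a₁₃; a₂₁, a₂₂, a₂₃; a₃₁, a₃₂, a₃₃] =
      !![b₁₁, b₁₂, b₁₃; b₂₁, b₂₂, b₂₃; b₃₁, b₃₂, b₃₃] := by
  subst h₁₁ h₁₂ h₁₃ h₂₁ h₂₂ h₂₃ h₃₁ h₃₂ h₃₃; rfl

noncomputable def Ework (a b c d e f : ℝ) : Matrix (Fin 3) (Fin 3) ℝ :=
  !![((-1)*c*e + b*f + b*e^2 + (-1)*b*d*f + a*c*e + (-1)*a*b*f), ((-1)*e^2 + d*f + d*e^2 + (-1)*d^2*f + b*c*e + (-1)*b^2*f), (e^3 + (-1)*d*e*f + c^2*e + (-1)*b*c*f);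
     (c^2 + (-1)*b*c*e + b^2*f + (-1)*a*f + (-1)*a*c^2 + a^2*f), (c*e + (-1)*c*d*e + (-1)*b*f + b*d*f + (-1)*b*c^2 + a*b*f), ((-1)*c*e^2 + (-1)*c^3 + b*e*f + a*c*f);
     ((-1)*b*c + b*c*d + (-1)*b^2*e + a*e + a*b*c + (-1)*a^2*e), ((-1)*c*d + c*d^2 + b*e + (-1)*b*d*e + b^2*c + (-1)*a*b*e), (c*d*e + (-1)*b*e^2 + b*c^2 + (-1)*a*c*e)]

set_option maxHeartbeats 1000000 in
lemma Mcube_aux (a b c d e f : ℝ) :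
    Ework a b c d e f * Ework a b c d e f * Ework a b c d e f =
      ((a * f - c ^ 2 + d * f - e ^ 2 - f
          - (a * (d * f - e * e) - b * (b * f - e * c) + c * (b * e - d * c)))
        * (a * (d * f - e * e) - b * (b * f - e * c) + c * (b * e - d * c)))
        • Ework a b c d e f := by
  unfold Ework
  rw [Matrix.mul_fin_three, Matrix.mul_fin_three, smul_fin_three']
  apply eq_fin_three' <;> ring


lemma Ework_eq (a b c d e f : ℝ) (A : Matrix (Fin 3) (Fin 3) ℝ)
    (hA : A = !![a, b, c; b, d, e; c, e, f]) :
    A.adjugate * Jmat * (A - 1) = Ework a b c d e f := by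
  subst hA
  have hsub : (!![a, b, c; b, d, e; c, e, f] - 1 : Matrix (Fin 3) (Fin 3) ℝ)
      = !![a - 1, b, c; b, d - 1, e; c, e, f - 1] := by
    ext i j
    fin_cases i <;> fin_cases j <;> simp [Matrix.one_apply]
  rw [hsub, Matrix.adjugate_fin_three_of, Jmat]
  unfold Ework
  rw [Matrix.mul_fin_three, Matrix.mul_fin_three]
  apply eq_fin_three' <;> ring

lemma Scube (a b c d e f : ℝ) (A : Matrix (Fin 3) (Fin 3) ℝ)
    (hA : A = !![a, b, c; b, d, e; c, e, f]) (hdet : A.det ≠ 0)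
    (μ : ℝ) (hμ : μ = a * f - c ^ 2 + d * f - e ^ 2 - f - A.det) :
    (Smat A) ^ 3 = (μ / A.det) • Smat A := by
  have hdet3 : A.det = a * (d * f - e * e) - b * (b * f - e * c) + c * (b * e - d * c) := by
    rw [hA, Matrix.det_fin_three]
    simp
    ring
  have hS : Smat A = (A.det)⁻¹ • (Ework a b c d e f) := by
    rw [Smat, Matrix.inv_def, Ring.inverse_eq_inv', ← Ework_eq a b c d e f A hA,
      Matrix.smul_mul, Matrix.smul_mul]
  have hE3 : Ework a b c d e f ^ 3
      = ((a * f - c ^ 2 + d * f - e ^ 2 - f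
          - (a * (d * f - e * e) - b * (b * f - e * c) + c * (b * e - d * c)))
        * (a * (d * f - e * e) - b * (b * f - e * c) + c * (b * e - d * c)))
        • Ework a b c d e f := by
    rw [pow_succ, pow_succ, pow_one]
    exact Mcube_aux a b c d e f
  rw [hS, smul_pow, hE3, smul_smul, smul_smul]
  congr 1
  rw [hμ, ← hdet3]
  field_simp

end Aux

/-- in the elliptic case `μ_A < 0`, with `λ := √(−μ_A/det A) > 0` and
`τ := 2π/λ`, the flow generated by `S` is `τ`-periodic: `e^{τS} = I`; in particular every
frequency trajectory `t ↦ e^{−tSᵀ}k₀` is `τ`-periodic and bounded. -/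
theorem elliptic_periodicity (a b c d e f : ℝ) (A : Matrix (Fin 3) (Fin 3) ℝ)
    (hA : A = !![a, b, c; b, d, e; c, e, f]) (hApd : A.PosDef)
    (μ : ℝ) (hμ : μ = a * f - c ^ 2 + d * f - e ^ 2 - f - A.det) (hμneg : μ < 0)
    (lam τ : ℝ) (hlam : lam = Real.sqrt (-μ / A.det)) (hτ : τ = 2 * π / lam) :
    0 < lam ∧
    NormedSpace.exp (τ • Smat A) = 1 ∧
    ∀ k₀ : Fin 3 → ℝ,
      Function.Periodic (fun t : ℝ => NormedSpace.exp ((-t) • (Smat A)ᵀ) *ᵥ k₀) τ ∧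
      ∃ C : ℝ, ∀ t : ℝ, ‖NormedSpace.exp ((-t) • (Smat A)ᵀ) *ᵥ k₀‖ ≤ C := by
  have hdetpos : 0 < A.det := hApd.det_pos
  have hdet0 : A.det ≠ 0 := ne_of_gt hdetpos
  have hratio : 0 < -μ / A.det := div_pos (by linarith) hdetpos
  have hlampos : 0 < lam := by rw [hlam]; exact Real.sqrt_pos.mpr hratio
  have hlam0 : lam ≠ 0 := ne_of_gt hlampos
  have hτpos : 0 < τ := by rw [hτ]; positivity
  have hτlam : τ * lam = 2 * π := by rw [hτ]; field_simp
  have hlam2 : lam ^ 2 = -μ / A.det := by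
    rw [hlam]; exact Real.sq_sqrt (le_of_lt hratio)
  have hmudiv : μ / A.det = -(lam ^ 2) := by
    rw [hlam2]; field_simp
  have hScube := Scube a b c d e f A hA hdet0 μ hμ
  have hNcube : (τ • Smat A) ^ 3 = -(((2 * π) ^ 2) • (τ • Smat A)) := by
    rw [smul_pow, hScube, smul_smul, smul_smul, ← neg_smul]
    congr 1
    rw [hmudiv, ← hτlam]
    ring
  letI : SeminormedRing (Matrix (Fin 3) (Fin 3) ℝ) := Matrix.linftyOpSemiNormedRing
  letI : NormedRing (Matrix (Fin 3) (Fin 3) ℝ) := Matrix.linftyOpNormedRing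
  letI : NormedAlgebra ℝ (Matrix (Fin 3) (Fin 3) ℝ) := Matrix.linftyOpNormedAlgebra
  have hexp1 : NormedSpace.exp (τ • Smat A) = 1 := exp_eq_one_of_cube _ hNcube
  refine ⟨hlampos, hexp1, fun k₀ => ?_⟩
  have hexpT : NormedSpace.exp ((-τ) • (Smat A)ᵀ) = 1 := by
    have h1 : (-τ) • (Smat A)ᵀ = (-(τ • Smat A))ᵀ := by
      rw [Matrix.transpose_neg, Matrix.transpose_smul, neg_smul]
    rw [h1, Matrix.exp_transpose, Matrix.exp_neg, hexp1, inv_one, Matrix.transpose_one]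
  have hper : Function.Periodic (fun t : ℝ => NormedSpace.exp ((-t) • (Smat A)ᵀ) *ᵥ k₀) τ := by
    intro t
    have hsplit : (-(t + τ)) • (Smat A)ᵀ = (-t) • (Smat A)ᵀ + (-τ) • (Smat A)ᵀ := by
      rw [← add_smul]; congr 1; ring
    have hcomm : Commute ((-t) • (Smat A)ᵀ) ((-τ) • (Smat A)ᵀ) :=
      ((Commute.refl ((Smat A)ᵀ)).smul_left (-t)).smul_right (-τ)
    simp only
    rw [hsplit, Matrix.exp_add_of_commute _ _ hcomm, hexpT, mul_one]
  refine ⟨hper, ?_⟩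
  have hcont : Continuous fun t : ℝ => NormedSpace.exp ((-t) • (Smat A)ᵀ) *ᵥ k₀ := by
    apply Continuous.matrix_mulVec ?_ continuous_const
    exact (continuous_iff_continuousAt.2 fun x => (NormedSpace.exp_analytic (𝕂 := ℝ) x).continuousAt).comp
      (continuous_neg.smul continuous_const)
  obtain ⟨C, hC⟩ := (isCompact_Icc (a := (0:ℝ)) (b := τ)).exists_bound_of_continuousOn
    hcont.continuousOn
  refine ⟨C, fun t => ?_⟩
  obtain ⟨y, hy, hty⟩ := hper.exists_mem_Ico₀ hτpos t
  rw [hty]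
  exact hC y (Set.Ico_subset_Icc_self hy)
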